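/- arXiv:1910.03365 — 2 statements merged into one kernel-verified Lean document; each statement's English description precedes it below -/
import Mathlib

section
/- Let A ∈ ℂ^{M×L} be the matrix whose columns are the steering vectors a_θ for θ in a finite set Θ of size L, and suppose rank(A) = L. Let c_θ > 0 for each θ ∈ Θ, and suppose δ satisfies 0 ≤ δ ≤ (min_θ c_θ)/√(1ᴴ(AᴴA)⁻¹1), where 1 ∈ ℂ^L is the all-ones vector. Then there exists w ∈ ℂ^M satisfying |wᴴa_θ − 1| + δ‖w‖ ≤ c_θ for all θ ∈ Θ (namely w = A(AᴴA)⁻¹1). -/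
open Matrix

theorem stmt_4 (M L : ℕ) (hM : 0 < M) (hL : 0 < L) (hLM : L ≤ M)
    (a : Fin L → EuclideanSpace ℂ (Fin M))
    (A : Matrix (Fin M) (Fin L) ℂ) (hA : ∀ i θ, A i θ = a θ i)
    (hrank : A.rank = L)
    (c : Fin L → ℝ) (hc : ∀ θ, 0 < c θ)
    (δ : ℝ) (hδ0 : 0 ≤ δ)
    (hδ : δ ≤ (⨅ θ, c θ) /
      Real.sqrt ((star (1 : Fin L → ℂ) ⬝ᵥ (Aᴴ * A)⁻¹.mulVec (1 : Fin L → ℂ)).re)) :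
    ∃ w : EuclideanSpace ℂ (Fin M),
      ∀ θ, ‖(inner ℂ w (a θ) : ℂ) - 1‖ + δ * ‖w‖ ≤ c θ := by
  classical
  set B : Matrix (Fin L) (Fin L) ℂ := Aᴴ * A with hB
  -- B is invertible
  have hBrank : B.rank = L := by
    open ComplexOrder in
    rw [hB, Matrix.rank_conjTranspose_mul_self, hrank]
  have hker : LinearMap.ker B.mulVecLin = ⊥ := by
    have h1 : Module.finrank ℂ (LinearMap.range B.mulVecLin)
        + Module.finrank ℂ (LinearMap.ker B.mulVecLin)
        = Module.finrank ℂ (Fin L → ℂ) := LinearMap.finrank_range_add_finrank_ker _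
    have h2 : Module.finrank ℂ (Fin L → ℂ) = L := by simp
    have h3 : Module.finrank ℂ (LinearMap.range B.mulVecLin) = L := hBrank
    have h4 : Module.finrank ℂ (LinearMap.ker B.mulVecLin) = 0 := by omega
    exact Submodule.finrank_eq_zero.mp h4
  have hBunit : IsUnit B := by
    rw [← Matrix.mulVec_injective_iff_isUnit]
    have := LinearMap.ker_eq_bot.mp hker
    exact this
  have hBdet : IsUnit B.det := (Matrix.isUnit_iff_isUnit_det B).mp hBunit
  have hBherm : B.IsHermitian := Matrix.isHermitian_conjTranspose_mul_self A
  have hBinvherm : (B⁻¹).IsHermitian := hBherm.inv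
  set v : Fin L → ℂ := B⁻¹.mulVec 1 with hv
  set wv : Fin M → ℂ := A.mulVec v with hw
  set w : EuclideanSpace ℂ (Fin M) := WithLp.toLp 2 wv
  -- key: (star wv) ᵥ* A = 1
  have key : (star wv) ᵥ* A = 1 := by
    have h1 : star wv = (star v) ᵥ* Aᴴ := Matrix.star_mulVec A v
    have h2 : star v = 1 ᵥ* B⁻¹ := by
      rw [hv, Matrix.star_mulVec, hBinvherm.eq, star_one]
    rw [h1, h2, Matrix.vecMul_vecMul, Matrix.vecMul_vecMul, ← hB,
      Matrix.nonsing_inv_mul B hBdet, Matrix.vecMul_one]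
  have hinner : ∀ θ, (inner ℂ w (a θ) : ℂ) = 1 := by
    intro θ
    have : (inner ℂ w (a θ) : ℂ) = ((star wv) ᵥ* A) θ := by
      simp only [PiLp.inner_apply, PiLp.toLp_apply, Matrix.vecMul, dotProduct, hA]
      simp [RCLike.inner_apply, Pi.star_apply, mul_comm, w]
    rw [this, key]; rfl
  -- norm of w
  have hnorm : ‖w‖ ^ 2 = (star (1 : Fin L → ℂ) ⬝ᵥ B⁻¹.mulVec (1 : Fin L → ℂ)).re := by
    have h1 : (inner ℂ w w : ℂ) = star wv ⬝ᵥ wv := by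
      simp only [PiLp.inner_apply, PiLp.toLp_apply, dotProduct]
      simp [RCLike.inner_apply, Pi.star_apply, mul_comm, w, Complex.mul_conj, Complex.normSq_eq_norm_sq]
    have h2 : star wv ⬝ᵥ wv = star (1 : Fin L → ℂ) ⬝ᵥ B⁻¹.mulVec 1 := by
      have h5 : star wv ⬝ᵥ wv = (star wv ᵥ* A) ⬝ᵥ v :=
        (Matrix.dotProduct_mulVec _ A v)
      rw [h5, key, star_one]
    have h3 : ‖w‖ ^ 2 = (inner ℂ w w : ℂ).re := by
      rw [← inner_self_eq_norm_sq (𝕜 := ℂ) w]; rfl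
    rw [h3, h1, h2]
  -- the infimum is positive
  have hne : Nonempty (Fin L) := ⟨⟨0, hL⟩⟩
  obtain ⟨θ₀, hθ₀⟩ := Finite.exists_min c
  have hinf_pos : 0 < ⨅ θ, c θ := lt_of_lt_of_le (hc θ₀) (le_ciInf hθ₀)
  have hinf_le : ∀ θ, (⨅ θ, c θ) ≤ c θ := fun θ =>
    ciInf_le (Set.Finite.bddBelow (Set.finite_range c)) θ
  -- bound δ * ‖w‖
  have hsqrt : Real.sqrt ((star (1 : Fin L → ℂ) ⬝ᵥ B⁻¹.mulVec (1 : Fin L → ℂ)).re) = ‖w‖ := by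
    rw [← hnorm, Real.sqrt_sq (norm_nonneg w)]
  have hbound : δ * ‖w‖ ≤ ⨅ θ, c θ := by
    rcases eq_or_lt_of_le (norm_nonneg w) with h0 | h0
    · rw [← h0, mul_zero]; exact le_of_lt hinf_pos
    · rw [hsqrt] at hδ
      calc δ * ‖w‖ ≤ ((⨅ θ, c θ) / ‖w‖) * ‖w‖ :=
            mul_le_mul_of_nonneg_right hδ (norm_nonneg w)
        _ = ⨅ θ, c θ := div_mul_cancel₀ _ (ne_of_gt h0)
  refine ⟨w, fun θ => ?_⟩
  rw [hinner θ, sub_self, norm_zero, zero_add]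
  exact le_trans hbound (hinf_le θ)
end

section
/- Let R be a Hermitian positive definite M×M complex matrix and a ∈ ℂ^M nonzero. Then w* = R⁻¹a / (aᴴR⁻¹a) satisfies wᴴa = 1 and minimizes wᴴRw over all w ∈ ℂ^M with wᴴa = 1, with minimum value 1/(aᴴR⁻¹a). -/
open Matrix
open scoped ComplexOrder

/-- Hermitian swap lemma for the sesquilinear form. -/
lemma herm_swap {M : ℕ} {B : Matrix (Fin M) (Fin M) ℂ} (hB : B.IsHermitian)
    (x y : Fin M → ℂ) : star x ⬝ᵥ B.mulVec y = star (star y ⬝ᵥ B.mulVec x) := by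
  rw [star_dotProduct, star_mulVec, ← dotProduct_mulVec, hB.eq]

theorem stmt_14 (M : ℕ) (hM : 0 < M) (R : Matrix (Fin M) (Fin M) ℂ)
    (hR : R.PosDef) (a : Fin M → ℂ) (ha : a ≠ 0)
    (wstar : Fin M → ℂ)
    (hw : wstar = (star a ⬝ᵥ R⁻¹.mulVec a)⁻¹ • R⁻¹.mulVec a) :
    star wstar ⬝ᵥ a = 1 ∧
    (∀ w : Fin M → ℂ, star w ⬝ᵥ a = 1 →
      (star wstar ⬝ᵥ R.mulVec wstar).re ≤ (star w ⬝ᵥ R.mulVec w).re) ∧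
    star wstar ⬝ᵥ R.mulVec wstar = (star a ⬝ᵥ R⁻¹.mulVec a)⁻¹ := by
  have hBpd : R⁻¹.PosDef := hR.inv
  set c : ℂ := star a ⬝ᵥ R⁻¹.mulVec a with hc_def
  have hc_pos : 0 < c := hBpd.dotProduct_mulVec_pos ha
  have hc_ne : c ≠ 0 := ne_of_gt hc_pos
  have hc_star : star c = c := by
    rcases (Complex.lt_def.mp hc_pos) with ⟨h1, h2⟩
    apply Complex.ext <;> simp [Complex.ext_iff] at * <;> simp [← h2]
  have hdet : IsUnit R.det := (Matrix.isUnit_iff_isUnit_det R).mp hR.isUnit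
  have hRRinv : R * R⁻¹ = 1 := Matrix.mul_nonsing_inv R hdet
  have hRinvR : R⁻¹ * R = 1 := Matrix.nonsing_inv_mul R hdet
  -- wstar ⬝ᵥ a = 1
  have h1 : star wstar ⬝ᵥ a = 1 := by
    rw [hw, star_smul, smul_dotProduct]
    have : star (R⁻¹.mulVec a) ⬝ᵥ a = c := by
      rw [star_mulVec, ← dotProduct_mulVec, hBpd.1.eq]
    rw [this]
    simp only [star_inv₀, hc_star, smul_eq_mul]
    exact inv_mul_cancel₀ hc_ne
  -- R *ᵥ wstar = c⁻¹ • a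
  have hRw : R.mulVec wstar = c⁻¹ • a := by
    rw [hw, mulVec_smul, mulVec_mulVec, hRRinv, one_mulVec]
  -- value of the quadratic form at wstar
  have h3 : star wstar ⬝ᵥ R.mulVec wstar = c⁻¹ := by
    rw [hRw, dotProduct_smul, hw, star_smul, smul_dotProduct]
    simp only [star_inv₀, hc_star, smul_eq_mul]
    rw [star_mulVec, ← dotProduct_mulVec, hBpd.1.eq, ← hc_def]
    field_simp
  refine ⟨h1, ?_, h3⟩
  intro w hwa
  set v : Fin M → ℂ := w - wstar with hv_def
  have hva : star v ⬝ᵥ a = 0 := by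
    rw [hv_def, star_sub, sub_dotProduct, hwa, h1, sub_self]
  have hcross : star v ⬝ᵥ R.mulVec wstar = 0 := by
    rw [hRw, dotProduct_smul, hva, smul_zero]
  have hcross' : star wstar ⬝ᵥ R.mulVec v = 0 := by
    rw [herm_swap hR.1, hcross, star_zero]
  have hsplit : star w ⬝ᵥ R.mulVec w
      = star wstar ⬝ᵥ R.mulVec wstar + star v ⬝ᵥ R.mulVec v := by
    have hwv : w = wstar + v := by rw [hv_def]; ring
    rw [hwv, star_add, add_dotProduct, mulVec_add, dotProduct_add, dotProduct_add,
      hcross, hcross']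
    ring
  have hvnn : 0 ≤ (star v ⬝ᵥ R.mulVec v).re := by
    rcases eq_or_ne v 0 with h | h
    · simp [h]
    · exact le_of_lt (Complex.lt_def.mp (hR.dotProduct_mulVec_pos h)).1
  rw [hsplit, Complex.add_re]
  linarith
end
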